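/- Base case m = 0, t = 3: a tree of maximum degree 3 with exactly three degree-3 vertices forming a path of adjacent vertices (each consecutive pair adjacent) has at most two Laplacian eigenvalues greater than or equal to 4, and at least one Laplacian eigenvalue strictly greater than 4. -/

import Mathlib

set_option linter.unusedSectionVars false
set_option linter.unusedVariables false

section Aux

open Finset Matrix

variable {V : Type*} [Fintype V] [DecidableEq V]

lemma aux_reachable_const {G : SimpleGraph V} {f : V → ℝ}
    (h : ∀ a b : V, G.Adj a b → f a = f b) {i j : V} (r : G.Reachable i j) : f i = f j := by
  obtain ⟨p⟩ := r
  induction p with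
  | nil => rfl
  | cons ha _ ih => exact (h _ _ ha).trans ih

lemma aux_unitary_dot {A : Matrix V V ℝ} (hA : A.IsHermitian) (a b : V → ℝ) :
    ((hA.eigenvectorUnitary : Matrix V V ℝ) *ᵥ a) ⬝ᵥ ((hA.eigenvectorUnitary : Matrix V V ℝ) *ᵥ b)
      = a ⬝ᵥ b := by
  set U := (hA.eigenvectorUnitary : Matrix V V ℝ) with hU
  have h1 : star U * U = 1 := Matrix.mem_unitaryGroup_iff'.mp hA.eigenvectorUnitary.2
  have hT : Uᵀ * U = 1 := by
    rwa [← Matrix.conjTranspose_eq_transpose_of_trivial, ← Matrix.star_eq_conjTranspose]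
  rw [Matrix.dotProduct_mulVec]
  have : (U *ᵥ a) ᵥ* U = a := by
    rw [← Matrix.mulVec_transpose, Matrix.mulVec_mulVec, hT, Matrix.one_mulVec]
  rw [this]

lemma aux_spectral {A : Matrix V V ℝ} (hA : A.IsHermitian) (y : V → ℝ) :
    ((hA.eigenvectorUnitary : Matrix V V ℝ) *ᵥ y) ⬝ᵥ
        (A *ᵥ ((hA.eigenvectorUnitary : Matrix V V ℝ) *ᵥ y))
      = ∑ i, hA.eigenvalues i * (y i) ^ 2 ∧
    ((hA.eigenvectorUnitary : Matrix V V ℝ) *ᵥ y) ⬝ᵥ ((hA.eigenvectorUnitary : Matrix V V ℝ) *ᵥ y)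
      = ∑ i, (y i) ^ 2 := by
  set U := (hA.eigenvectorUnitary : Matrix V V ℝ) with hU
  have h1 : star U * U = 1 := Matrix.mem_unitaryGroup_iff'.mp hA.eigenvectorUnitary.2
  have hspec : A = U * Matrix.diagonal hA.eigenvalues * star U := by
    simpa using hA.spectral_theorem
  constructor
  · have hAU : A *ᵥ (U *ᵥ y) = U *ᵥ (Matrix.diagonal hA.eigenvalues *ᵥ y) := by
      rw [Matrix.mulVec_mulVec, Matrix.mulVec_mulVec]
      have : A * U = U * Matrix.diagonal hA.eigenvalues := by
        conv_lhs => rw [hspec]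
        rw [Matrix.mul_assoc, Matrix.mul_assoc, h1, Matrix.mul_one]
      rw [this]
    rw [hAU, aux_unitary_dot hA]
    simp only [dotProduct, Matrix.mulVec_diagonal]
    exact Finset.sum_congr rfl fun i _ => by ring
  · rw [aux_unitary_dot hA]
    simp only [dotProduct]
    exact Finset.sum_congr rfl fun i _ => by ring

lemma aux_comb (G : SimpleGraph V) [DecidableRel G.Adj] (hconn : G.Preconnected)
    (hdeg : ∀ x : V, G.degree x ≤ 3)
    (u v w : V) (hv : G.degree v = 3)
    (honly : ∀ x : V, G.degree x = 3 → x = u ∨ x = v ∨ x = w)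
    (huv : G.Adj u v) (hvw : G.Adj v w) (huw : u ≠ w)
    (x : V → ℝ) (hx : x ≠ 0) (h1 : x u = x v) (h2 : x v = x w) :
    x ⬝ᵥ (G.lapMatrix ℝ *ᵥ x) < 4 * (x ⬝ᵥ x) := by
  have huv' : u ≠ v := huv.ne
  have hvw' : v ≠ w := hvw.ne
  set F : V → V → ℝ := fun i j => if G.Adj i j then (x i - x j) ^ 2 else 0 with hF
  set B : V → V → ℝ := fun i j => if G.Adj i j then 2 * (x i) ^ 2 + 2 * (x j) ^ 2 else 0 with hB
  have hFB : ∀ i j : V, F i j ≤ B i j := by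
    intro i j
    simp only [hF, hB]
    split
    · nlinarith [sq_nonneg (x i + x j)]
    · exact le_rfl
  -- sum of B
  have hBsum : ∑ i : V, ∑ j : V, B i j = 4 * ∑ i : V, (G.degree i : ℝ) * (x i) ^ 2 := by
    have expand : ∀ i j : V, B i j =
        (if G.Adj i j then 2 * (x i) ^ 2 else 0) + (if G.Adj i j then 2 * (x j) ^ 2 else 0) := by
      intro i j; simp only [hB]; split <;> simp
    simp_rw [expand, Finset.sum_add_distrib]
    have hrow : ∀ i : V, ∑ j : V, (if G.Adj i j then 2 * (x i) ^ 2 else 0)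
        = (G.degree i : ℝ) * (2 * (x i) ^ 2) := by
      intro i
      rw [SimpleGraph.degree_eq_sum_if_adj, Finset.sum_mul]
      exact Finset.sum_congr rfl fun j _ => by split <;> simp
    have hcol : ∑ i : V, ∑ j : V, (if G.Adj i j then 2 * (x j) ^ 2 else 0)
        = ∑ j : V, (G.degree j : ℝ) * (2 * (x j) ^ 2) := by
      rw [Finset.sum_comm]
      refine Finset.sum_congr rfl fun j _ => ?_
      rw [SimpleGraph.degree_eq_sum_if_adj, Finset.sum_mul]
      refine Finset.sum_congr rfl fun i _ => ?_
      by_cases h : G.Adj i j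
      · rw [if_pos h, if_pos (G.adj_symm h), one_mul]
      · rw [if_neg h, if_neg (fun h' => h (G.adj_symm h')), zero_mul]
    rw [Finset.sum_congr rfl fun i _ => hrow i, hcol, ← Finset.sum_add_distrib]
    rw [Finset.mul_sum]
    exact Finset.sum_congr rfl fun i _ => by ring
  -- degree bound
  have hdsum : ∑ i : V, (G.degree i : ℝ) * (x i) ^ 2
      ≤ 2 * (∑ i : V, (x i) ^ 2) + 3 * (x v) ^ 2 := by
    have hpt : ∀ i : V, (G.degree i : ℝ) * (x i) ^ 2
        ≤ 2 * (x i) ^ 2 + (if i ∈ ({u, v, w} : Finset V) then (x i) ^ 2 else 0) := by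
      intro i
      by_cases hi : i ∈ ({u, v, w} : Finset V)
      · rw [if_pos hi]
        have : (G.degree i : ℝ) ≤ 3 := by exact_mod_cast hdeg i
        nlinarith [sq_nonneg (x i)]
      · rw [if_neg hi]
        have hd3 : G.degree i ≠ 3 := by
          intro h3
          rcases honly i h3 with h | h | h <;> simp [h] at hi
        have : (G.degree i : ℝ) ≤ 2 := by
          have := hdeg i; exact_mod_cast by omega
        nlinarith [sq_nonneg (x i)]
    calc ∑ i : V, (G.degree i : ℝ) * (x i) ^ 2
        ≤ ∑ i : V, (2 * (x i) ^ 2 + (if i ∈ ({u, v, w} : Finset V) then (x i) ^ 2 else 0)) :=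
          Finset.sum_le_sum fun i _ => hpt i
      _ = 2 * (∑ i : V, (x i) ^ 2) + 3 * (x v) ^ 2 := by
          rw [Finset.sum_add_distrib, Finset.sum_ite_mem, Finset.univ_inter, Finset.mul_sum]
          congr 1
          rw [Finset.sum_insert (by simp [huv', huw]), Finset.sum_insert (by simp [hvw']),
            Finset.sum_singleton, h1, h2]
          ring
  -- the slack from special pairs
  set P : Finset (V × V) := {(u, v), (v, u), (v, w), (w, v)} with hP
  have hPsum : ∑ p ∈ P, (B p.1 p.2 - F p.1 p.2) = 16 * (x v) ^ 2 := by
    have e1 : ((u, v) : V × V) ≠ (v, u) := by simp [Prod.ext_iff]; tauto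
    have e2 : ((u, v) : V × V) ≠ (v, w) := by simp [Prod.ext_iff]; tauto
    have e3 : ((u, v) : V × V) ≠ (w, v) := by simp [Prod.ext_iff]; tauto
    have e4 : ((v, u) : V × V) ≠ (v, w) := by simp [Prod.ext_iff]; tauto
    have e5 : ((v, u) : V × V) ≠ (w, v) := by simp [Prod.ext_iff]; tauto
    have e6 : ((v, w) : V × V) ≠ (w, v) := by simp [Prod.ext_iff]; tauto
    rw [hP]
    rw [Finset.sum_insert (by simp [e1, e2, e3]), Finset.sum_insert (by simp [e4, e5]),
      Finset.sum_insert (by simp [e6]), Finset.sum_singleton]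
    simp only [hF, hB, if_pos huv, if_pos huv.symm, if_pos hvw, if_pos hvw.symm]
    rw [h1] at *
    rw [h2] at *
    ring
  have hPsub : P ⊆ Finset.univ ×ˢ Finset.univ := fun p _ => by simp
  have hslack : ∑ p ∈ P, (B p.1 p.2 - F p.1 p.2)
      ≤ ∑ p ∈ Finset.univ ×ˢ Finset.univ, (B p.1 p.2 - F p.1 p.2) :=
    Finset.sum_le_sum_of_subset_of_nonneg hPsub fun p _ _ => sub_nonneg.2 (hFB p.1 p.2)
  have hprodF : ∑ p ∈ Finset.univ ×ˢ Finset.univ, F p.1 p.2 = ∑ i : V, ∑ j : V, F i j := by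
    rw [Finset.sum_product]
  have hprodB : ∑ p ∈ Finset.univ ×ˢ Finset.univ, B p.1 p.2 = ∑ i : V, ∑ j : V, B i j := by
    rw [Finset.sum_product]
  have hmain : ∑ i : V, ∑ j : V, F i j < 8 * ∑ i : V, (x i) ^ 2 := by
    by_cases hc : x v = 0
    · -- need strict pointwise somewhere
      obtain ⟨i0, hi0⟩ := Function.ne_iff.mp hx
      have hne : ∃ a b : V, G.Adj a b ∧ (x a) ^ 2 ≠ (x b) ^ 2 := by
        by_contra hcon
        push_neg at hcon
        have := aux_reachable_const (f := fun i => (x i) ^ 2)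
          (fun a b hab => hcon a b hab) (hconn i0 v)
        have h0 : x i0 ^ 2 = 0 := by rw [this, hc]; ring
        exact hi0 (pow_eq_zero_iff (by norm_num : (2:ℕ) ≠ 0) |>.mp h0)
      obtain ⟨a, b, hab, habne⟩ := hne
      have hstrict : F a b < B a b := by
        simp only [hF, hB, if_pos hab]
        have : x a + x b ≠ 0 := by
          intro h0
          apply habne
          have : x a = - x b := by linarith
          rw [this]; ring
        nlinarith [mul_self_pos.mpr this]
      have hlt : ∑ p ∈ Finset.univ ×ˢ Finset.univ, F p.1 p.2
          < ∑ p ∈ Finset.univ ×ˢ Finset.univ, B p.1 p.2 := by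
        refine Finset.sum_lt_sum (fun p _ => hFB p.1 p.2) ⟨(a, b), by simp, hstrict⟩
      rw [hprodF, hprodB] at hlt
      have := hdsum
      rw [hc] at this
      nlinarith
    · have h16 : 16 * (x v) ^ 2 ≤ ∑ i : V, ∑ j : V, B i j - ∑ i : V, ∑ j : V, F i j := by
        rw [← hprodF, ← hprodB, ← Finset.sum_sub_distrib, ← hPsum]
        exact hslack
      have hvpos : 0 < (x v) ^ 2 := by positivity
      nlinarith
  have hquad : x ⬝ᵥ (G.lapMatrix ℝ *ᵥ x) = (∑ i : V, ∑ j : V, F i j) / 2 := by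
    rw [← Matrix.toLinearMap₂'_apply', SimpleGraph.lapMatrix_toLinearMap₂']
  have hxx : x ⬝ᵥ x = ∑ i : V, (x i) ^ 2 := by
    simp only [dotProduct]
    exact Finset.sum_congr rfl fun i _ => by ring
  rw [hquad, hxx]
  linarith

open scoped Classical in
lemma aux_part1 (G : SimpleGraph V) [DecidableRel G.Adj] (hT : G.IsTree)
    (hdeg : ∀ x : V, G.degree x ≤ 3)
    (u v w : V) (hv : G.degree v = 3)
    (honly : ∀ x : V, G.degree x = 3 → x = u ∨ x = v ∨ x = w)
    (huv : G.Adj u v) (hvw : G.Adj v w) (huw : u ≠ w) :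
    (Finset.univ.filter
      fun i => (4:ℝ) ≤ (SimpleGraph.posSemidef_lapMatrix ℝ G).1.eigenvalues i).card ≤ 2 := by
  set hL := (SimpleGraph.posSemidef_lapMatrix ℝ G).1 with hLdef
  by_contra hcon
  push_neg at hcon
  set T : Finset V := Finset.univ.filter (fun i => (4:ℝ) ≤ hL.eigenvalues i) with hT'
  have hcard : 3 ≤ T.card := hcon
  set U := (hL.eigenvectorUnitary : Matrix V V ℝ) with hU
  -- extension by zero linear map
  let Φ : ({i // i ∈ T} → ℝ) →ₗ[ℝ] (V → ℝ) :=
    { toFun := fun c i => if h : i ∈ T then c ⟨i, h⟩ else 0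
      map_add' := by intro a b; funext i; by_cases h : i ∈ T <;> simp [h]
      map_smul' := by intro m a; funext i; by_cases h : i ∈ T <;> simp [h] }
  let pu : (V → ℝ) →ₗ[ℝ] ℝ := LinearMap.proj u
  let pv : (V → ℝ) →ₗ[ℝ] ℝ := LinearMap.proj v
  let pw : (V → ℝ) →ₗ[ℝ] ℝ := LinearMap.proj w
  let ψ : ({i // i ∈ T} → ℝ) →ₗ[ℝ] ℝ × ℝ :=
    ((pu - pv).prod (pv - pw)).comp (U.mulVecLin.comp Φ)
  have hker : LinearMap.ker ψ ≠ ⊥ := by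
    intro hbot
    have hrk := LinearMap.finrank_range_add_finrank_ker ψ
    rw [hbot, finrank_bot, add_zero] at hrk
    have hle : Module.finrank ℝ (LinearMap.range ψ) ≤ Module.finrank ℝ (ℝ × ℝ) :=
      Submodule.finrank_le _
    rw [Module.finrank_prod, Module.finrank_self] at hle
    rw [Module.finrank_pi, Fintype.card_coe] at hrk
    omega
  obtain ⟨c, hcker, hc0⟩ := Submodule.ne_bot_iff _ |>.mp hker
  set y : V → ℝ := Φ c with hy
  have hyoff : ∀ i : V, i ∉ T → y i = 0 := by
    intro i hi
    simp only [hy, Φ, LinearMap.coe_mk, AddHom.coe_mk]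
    exact dif_neg hi
  have hyval : ∀ j : {i // i ∈ T}, y (j : V) = c j := by
    intro j
    simp only [hy, Φ, LinearMap.coe_mk, AddHom.coe_mk]
    rw [dif_pos j.2]
  have hy0 : y ≠ 0 := by
    obtain ⟨j, hj⟩ := Function.ne_iff.mp hc0
    intro h0
    apply hj
    have := hyval j
    rw [h0] at this
    simpa using this.symm
  set x : V → ℝ := U *ᵥ y with hx
  have hψ : ψ c = 0 := hcker
  have hxuv : x u = x v ∧ x v = x w := by
    have := hψ
    simp only [ψ, pu, pv, pw, LinearMap.comp_apply, LinearMap.prod_apply, Function.prod, LinearMap.sub_apply,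
      LinearMap.proj_apply, Matrix.mulVecLin_apply, Prod.mk_eq_zero, sub_eq_zero] at this
    exact this
  have hx0 : x ≠ 0 := by
    intro h0
    apply hy0
    have h1 : star U * U = 1 := Matrix.mem_unitaryGroup_iff'.mp hL.eigenvectorUnitary.2
    have : y = star U *ᵥ x := by
      rw [hx, Matrix.mulVec_mulVec, h1, Matrix.one_mulVec]
    rw [this, h0, Matrix.mulVec_zero]
  obtain ⟨hq, hn⟩ := aux_spectral hL y
  have hge : 4 * (x ⬝ᵥ x) ≤ x ⬝ᵥ (G.lapMatrix ℝ *ᵥ x) := by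
    rw [hx, hq, hn, Finset.mul_sum]
    refine Finset.sum_le_sum fun i _ => ?_
    by_cases hi : i ∈ T
    · have h4 : (4:ℝ) ≤ hL.eigenvalues i := (Finset.mem_filter.mp hi).2
      nlinarith [sq_nonneg (y i)]
    · rw [hyoff i hi]; simp
  have hlt := aux_comb G hT.isConnected.preconnected hdeg u v w hv honly huv hvw huw
    x hx0 hxuv.1 hxuv.2
  linarith

lemma aux_part2 (G : SimpleGraph V) [DecidableRel G.Adj] (hT : G.IsTree)
    (u v w : V) (hu : G.degree u = 3)
    (huv : G.Adj u v) (hvw : G.Adj v w) (huw : u ≠ w) :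
    ∃ i, 4 < (SimpleGraph.posSemidef_lapMatrix ℝ G).1.eigenvalues i := by
  set hL := (SimpleGraph.posSemidef_lapMatrix ℝ G).1 with hLdef
  by_contra hcon
  push_neg at hcon
  -- no edge u w (else triangle)
  have hnuw : ¬ G.Adj u w := by
    intro hadj
    have hc : (SimpleGraph.Walk.cons huv
        (SimpleGraph.Walk.cons hvw (SimpleGraph.Walk.cons hadj.symm SimpleGraph.Walk.nil))).IsCycle := by
      simp [SimpleGraph.Walk.isCycle_def, SimpleGraph.Walk.isTrail_def, huv.ne, hvw.ne, huw,
        huv.ne', hvw.ne', Ne.symm huw, Sym2.eq, Sym2.rel_iff', Prod.ext_iff]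
    exact hT.IsAcyclic _ hc
  set x : V → ℝ := fun z => if z = u then (3:ℝ) else if G.Adj u z then -1 else 0 with hxdef
  have hxu : x u = 3 := by simp [hxdef]
  have hxadj : ∀ z : V, G.Adj u z → x z = -1 := by
    intro z hz
    simp only [hxdef]
    rw [if_neg (fun h => (h ▸ hz).ne rfl), if_pos hz]
  have hxv : x v = -1 := hxadj v huv
  have hxw : x w = 0 := by
    simp only [hxdef]
    rw [if_neg (Ne.symm huw), if_neg hnuw]
  -- norm
  have hxx : x ⬝ᵥ x = 12 := by
    have hpt : ∀ i : V, x i * x i =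
        (if i = u then (9:ℝ) else 0) + (if G.Adj u i then 1 else 0) := by
      intro i
      by_cases h : i = u
      · subst h
        rw [if_pos rfl, if_neg (G.irrefl), hxu]; norm_num
      · rw [if_neg h]
        by_cases h2 : G.Adj u i
        · rw [if_pos h2, hxadj i h2]; norm_num
        · rw [if_neg h2]
          simp only [hxdef]
          rw [if_neg h, if_neg h2]; norm_num
    simp only [dotProduct]
    rw [Finset.sum_congr rfl fun i _ => hpt i, Finset.sum_add_distrib]
    rw [Finset.sum_ite_eq' Finset.univ u fun _ => (9:ℝ)]
    rw [← SimpleGraph.degree_eq_sum_if_adj, hu]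
    simp; norm_num
  -- quadratic form lower bound
  set F : V → V → ℝ := fun i j => if G.Adj i j then (x i - x j) ^ 2 else 0 with hF
  have hFnn : ∀ i j : V, 0 ≤ F i j := by
    intro i j; simp only [hF]; split
    · positivity
    · exact le_rfl
  set h : V → ℝ := fun i => ∑ j : V, F i j with hh
  have hhnn : ∀ i : V, 0 ≤ h i := fun i => Finset.sum_nonneg fun j _ => hFnn i j
  have hhu : h u = 48 := by
    have : ∀ j : V, F u j = if G.Adj u j then (16:ℝ) else 0 := by
      intro j
      simp only [hF]
      by_cases hj : G.Adj u j
      · rw [if_pos hj, if_pos hj, hxu, hxadj j hj]; norm_num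
      · rw [if_neg hj, if_neg hj]
    simp only [hh]
    rw [Finset.sum_congr rfl fun j _ => this j]
    have : ∑ j : V, (if G.Adj u j then (16:ℝ) else 0) = 16 * (G.degree u : ℝ) := by
      rw [SimpleGraph.degree_eq_sum_if_adj, Finset.mul_sum]
      exact Finset.sum_congr rfl fun j _ => by split <;> norm_num
    rw [this, hu]; norm_num
  have hNmem : ∀ i : V, i ∈ G.neighborFinset u → (16:ℝ) ≤ h i := by
    intro i hi
    rw [SimpleGraph.mem_neighborFinset] at hi
    have h16 : F i u = 16 := by
      simp only [hF]
      rw [if_pos hi.symm, hxadj i hi, hxu]; norm_num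
    calc (16:ℝ) = ∑ j ∈ ({u} : Finset V), F i j := by rw [Finset.sum_singleton, h16]
      _ ≤ ∑ j : V, F i j := Finset.sum_le_sum_of_subset_of_nonneg
          (Finset.subset_univ _) (fun j _ _ => hFnn i j)
  have hhv : (17:ℝ) ≤ h v := by
    have hFvu : F v u = 16 := by
      simp only [hF]
      rw [if_pos huv.symm, hxv, hxu]; norm_num
    have hFvw : F v w = 1 := by
      simp only [hF]
      rw [if_pos hvw, hxv, hxw]; norm_num
    calc (17:ℝ) = ∑ j ∈ ({u, w} : Finset V), F v j := by
          rw [Finset.sum_pair huw, hFvu, hFvw]; norm_num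
      _ ≤ ∑ j : V, F v j := Finset.sum_le_sum_of_subset_of_nonneg
          (Finset.subset_univ _) (fun j _ _ => hFnn v j)
  have hS : (97:ℝ) ≤ ∑ i : V, ∑ j : V, F i j := by
    have hsub : insert u (G.neighborFinset u) ⊆ Finset.univ := Finset.subset_univ _
    have hnotm : u ∉ G.neighborFinset u := G.notMem_neighborFinset_self u
    have hstep : ∑ i ∈ insert u (G.neighborFinset u), h i ≤ ∑ i : V, h i :=
      Finset.sum_le_sum_of_subset_of_nonneg hsub (fun i _ _ => hhnn i)
    have hvmem : v ∈ G.neighborFinset u := (SimpleGraph.mem_neighborFinset G u v).mpr huv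
    have herase : ∑ i ∈ G.neighborFinset u, h i
        = h v + ∑ i ∈ (G.neighborFinset u).erase v, h i :=
      (Finset.add_sum_erase _ h hvmem).symm
    have hcarde : ((G.neighborFinset u).erase v).card = 2 := by
      rw [Finset.card_erase_of_mem hvmem]
      rw [← SimpleGraph.card_neighborFinset_eq_degree] at hu
      omega
    have herest : (32:ℝ) ≤ ∑ i ∈ (G.neighborFinset u).erase v, h i := by
      calc (32:ℝ) = ∑ _i ∈ (G.neighborFinset u).erase v, (16:ℝ) := by
            rw [Finset.sum_const, hcarde]; norm_num
        _ ≤ _ := Finset.sum_le_sum fun i hi =>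
            hNmem i (Finset.mem_of_mem_erase hi)
    have : (97:ℝ) ≤ ∑ i ∈ insert u (G.neighborFinset u), h i := by
      rw [Finset.sum_insert hnotm, hhu, herase]
      linarith
    calc (97:ℝ) ≤ ∑ i ∈ insert u (G.neighborFinset u), h i := this
      _ ≤ ∑ i : V, h i := hstep
      _ = ∑ i : V, ∑ j : V, F i j := rfl
  have hquad : x ⬝ᵥ (G.lapMatrix ℝ *ᵥ x) = (∑ i : V, ∑ j : V, F i j) / 2 := by
    rw [← Matrix.toLinearMap₂'_apply', SimpleGraph.lapMatrix_toLinearMap₂']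
  -- spectral upper bound
  set U := (hL.eigenvectorUnitary : Matrix V V ℝ) with hU
  have h1 : U * star U = 1 := Matrix.mem_unitaryGroup_iff.mp hL.eigenvectorUnitary.2
  have hxy : x = U *ᵥ (star U *ᵥ x) := by
    rw [Matrix.mulVec_mulVec, h1, Matrix.one_mulVec]
  obtain ⟨hq, hn⟩ := aux_spectral hL (star U *ᵥ x)
  rw [← hxy] at hq hn
  have hle : x ⬝ᵥ (G.lapMatrix ℝ *ᵥ x) ≤ 4 * (x ⬝ᵥ x) := by
    rw [hq, hn, Finset.mul_sum]
    refine Finset.sum_le_sum fun i _ => ?_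
    have := hcon i
    nlinarith [sq_nonneg ((star U *ᵥ x) i)]
  rw [hxx] at hle
  rw [hquad] at hle
  linarith

lemma eig_inst {V : Type*} [Fintype V] [DecidableEq V] (G : SimpleGraph V)
    (i1 i2 : DecidableRel G.Adj)
    (h1 : (@SimpleGraph.lapMatrix V ℝ _ G i1 _ _).IsHermitian)
    (h2 : (@SimpleGraph.lapMatrix V ℝ _ G i2 _ _).IsHermitian) :
    h1.eigenvalues = h2.eigenvalues := by
  cases Subsingleton.elim i1 i2
  rfl

end Aux


open scoped Classical in
/-- Number of Laplacian eigenvalues (with multiplicity) that are `≥ 4`. -/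
noncomputable def n4plus {V : Type*} [Fintype V] [DecidableEq V] (G : SimpleGraph V) : ℕ :=
  (Finset.univ.filter
    fun i => (4:ℝ) ≤ (SimpleGraph.posSemidef_lapMatrix ℝ G).1.eigenvalues i).card

open scoped Classical in
/-- The `j`-th largest Laplacian eigenvalue (1-indexed). -/
noncomputable def eigDesc {V : Type*} [Fintype V] [DecidableEq V] (G : SimpleGraph V) (j : ℕ) : ℝ :=
  ((Finset.univ.val.map (SimpleGraph.posSemidef_lapMatrix ℝ G).1.eigenvalues).sort (· ≤ ·)).getD
    (Fintype.card V - j) 0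

/-- base case `m = 0`, `t = 3`: a tree of maximum degree 3 with exactly
three degree-3 vertices `u, v, w`, pairwise consecutive (`u ~ v`, `v ~ w`), has at most
two Laplacian eigenvalues `≥ 4` and at least one Laplacian eigenvalue `> 4`. -/
theorem base_case_three_junctions {V : Type*} [Fintype V] [DecidableEq V]
    (G : SimpleGraph V) [DecidableRel G.Adj] (hT : G.IsTree)
    (hdeg : ∀ x : V, G.degree x ≤ 3)
    (u v w : V) (hu : G.degree u = 3) (hv : G.degree v = 3) (hw : G.degree w = 3)
    (honly : ∀ x : V, G.degree x = 3 → x = u ∨ x = v ∨ x = w)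
    (huv : G.Adj u v) (hvw : G.Adj v w) (huw : u ≠ w) :
    n4plus G ≤ 2 ∧
      ∃ i, 4 < (SimpleGraph.posSemidef_lapMatrix ℝ G).1.eigenvalues i := by
  constructor
  · have h1 := aux_part1 G hT hdeg u v w hv honly huv hvw huw
    unfold n4plus
    rw [eig_inst G _ inferInstance _ (SimpleGraph.posSemidef_lapMatrix ℝ G).1]
    exact h1
  · exact aux_part2 G hT u v w hu huv hvw huw
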